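/- Let w : ℝ → ℝ be a smooth function with supp(w) ⊆ (−1,1) and w(x) = w(−x) for all x∈ℝ. Let η > 0 and A > 0. Then there exists a constant C > 0, depending only on w, η and A, such that for all Q ≥ 1, all δ ∈ (0,1/2) and all x ∈ ℝ, one has | w(‖x‖/δ) − δ·ŵ(0) − δ·Σ_{1 ≤ |j| ≤ Q^η/δ, j∈ℤ} ŵ(δj)·e(jx) | ≤ C·Q^{−A}. -/

import Mathlib

noncomputable section

open MeasureTheory Metric Real Set Function

/-- distance from `x` to the nearest integer -/
def intDist (x : ℝ) : ℝ := |x - (round x : ℝ)|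

/-- `e(x) = exp(2πix)` -/
def e2pi (x : ℝ) : ℂ := Complex.exp (2 * Real.pi * Complex.I * x)

/-- the Fourier transform `ŵ(ξ) = ∫ w(y) e(−yξ) dy` -/
def ftransform (w : ℝ → ℝ) (ξ : ℝ) : ℂ := ∫ y : ℝ, (w y : ℂ) * e2pi (-(y * ξ))

open scoped FourierTransform

lemma norm_e2pi (t : ℝ) : ‖e2pi t‖ = 1 := by
  simp [e2pi, Complex.norm_exp, Complex.mul_re, Complex.mul_im]

lemma e2pi_zero : e2pi 0 = 1 := by simp [e2pi]

open Finset in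
lemma tail_sum_sq {M : ℝ} (hM : 2 ≤ M) :
    ∑' j : ℤ, (if M < |(j : ℝ)| then ((j : ℝ) ^ 2)⁻¹ else 0) ≤ 4 / M := by
  have hM0 : 0 < M := by linarith
  set N : ℕ := ⌈M⌉₊ with hN
  have hMN : M ≤ N := Nat.le_ceil M
  have hN2 : 2 ≤ N := by
    have : (2 : ℝ) ≤ (N : ℝ) := le_trans hM hMN
    exact_mod_cast this
  set φ : ℕ → ℝ := fun n => if N ≤ n then ((n : ℝ) ^ 2)⁻¹ else 0 with hφ
  have φnonneg : ∀ n, 0 ≤ φ n := by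
    intro n; simp only [hφ]; split <;> positivity
  have hNcast : ((N - 1 : ℕ) : ℝ) = (N : ℝ) - 1 := by
    rw [Nat.cast_sub (by omega)]; norm_num
  have key : ∀ K, ∑ i ∈ range K, φ i ≤ 2 / M := by
    intro K
    have h1 : ∑ i ∈ range K, φ i = ∑ i ∈ (range K).filter (fun i => N ≤ i), ((i : ℝ) ^ 2)⁻¹ := by
      rw [Finset.sum_filter]
    have h2 : (range K).filter (fun i => N ≤ i) ⊆ Ioc (N - 1) (max (K - 1) N) := by
      intro i hi
      simp only [Finset.mem_filter, Finset.mem_range] at hi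
      simp only [Finset.mem_Ioc]
      omega
    have h3 : ∑ i ∈ (range K).filter (fun i => N ≤ i), ((i : ℝ) ^ 2)⁻¹
        ≤ ∑ i ∈ Ioc (N - 1) (max (K - 1) N), ((i : ℝ) ^ 2)⁻¹ :=
      Finset.sum_le_sum_of_subset_of_nonneg h2 (fun i _ _ => by positivity)
    have h4 : ∑ i ∈ Ioc (N - 1) (max (K - 1) N), ((i : ℝ) ^ 2)⁻¹
        ≤ ((N - 1 : ℕ) : ℝ)⁻¹ - ((max (K - 1) N : ℕ) : ℝ)⁻¹ :=
      sum_Ioc_inv_sq_le_sub (by omega) (by omega)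
    have h5 : ((N - 1 : ℕ) : ℝ)⁻¹ ≤ 2 / M := by
      rw [hNcast, show (2:ℝ)/M = (M/2)⁻¹ by rw [inv_div]]
      apply inv_anti₀ (by positivity)
      have h2N : (2 : ℝ) ≤ N := le_trans hM hMN
      linarith [hMN]
    have h6 : (0:ℝ) ≤ ((max (K - 1) N : ℕ) : ℝ)⁻¹ := by positivity
    calc ∑ i ∈ range K, φ i ≤ ((N - 1 : ℕ) : ℝ)⁻¹ - ((max (K - 1) N : ℕ) : ℝ)⁻¹ := by
          rw [h1]; exact h3.trans h4
      _ ≤ 2 / M := by linarith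
  have φsummable : Summable φ := summable_of_sum_range_le φnonneg key
  have hφtsum : ∑' n : ℕ, φ n ≤ 2 / M := Real.tsum_le_of_sum_range_le φnonneg key
  have key' : ∀ K, ∑ i ∈ range K, φ (i + 1) ≤ 2 / M := by
    intro K
    have h0 : φ 0 = 0 := by simp only [hφ]; rw [if_neg (by omega)]
    have := Finset.sum_range_succ' φ K
    have h2 : ∑ i ∈ range K, φ (i + 1) = ∑ i ∈ range (K + 1), φ i := by
      rw [this, h0, add_zero]
    rw [h2]; exact key _
  have φ'summable : Summable (fun n : ℕ => φ (n + 1)) :=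
    summable_of_sum_range_le (fun n => φnonneg _) key'
  have hφ'tsum : ∑' n : ℕ, φ (n + 1) ≤ 2 / M :=
    Real.tsum_le_of_sum_range_le (fun n => φnonneg _) key'
  set ψ : ℤ → ℝ := fun j => φ j.natAbs with hψ
  have hψ1 : (fun n : ℕ => ψ n) = φ := by funext n; simp [hψ]
  have hψ2 : (fun n : ℕ => ψ (-(n + 1))) = fun n : ℕ => φ (n + 1) := by
    funext n
    have h1 : (-1 + -(n:ℤ)).natAbs = n + 1 := by omega
    simp [hψ, h1]
  have ψsummable : Summable ψ :=
    Summable.of_nat_of_neg_add_one (hψ1 ▸ φsummable) (hψ2 ▸ φ'summable)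
  have hψtsum : ∑' j : ℤ, ψ j ≤ 4 / M := by
    rw [tsum_of_nat_of_neg_add_one (hψ1 ▸ φsummable) (hψ2 ▸ φ'summable), hψ1, hψ2]
    calc ∑' n : ℕ, φ n + ∑' n : ℕ, φ (n + 1) ≤ 2 / M + 2 / M := add_le_add hφtsum hφ'tsum
      _ = 4 / M := by ring
  have hle : ∀ j : ℤ, (if M < |(j : ℝ)| then ((j : ℝ) ^ 2)⁻¹ else 0) ≤ ψ j := by
    intro j
    by_cases h : M < |(j : ℝ)|
    · rw [if_pos h]
      have habs : |(j : ℝ)| = (j.natAbs : ℝ) := by rw [← Int.cast_abs, Int.abs_eq_natAbs, Int.cast_natCast]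
      have hNle : N ≤ j.natAbs := by
        rw [Nat.ceil_le]
        rw [habs] at h
        exact (le_of_lt h)
      have : ψ j = ((j.natAbs : ℝ) ^ 2)⁻¹ := by simp [hψ, hφ, if_pos hNle]
      rw [this]
      have : ((j : ℝ) ^ 2) = ((j.natAbs : ℝ) ^ 2) := by
        rw [← habs, sq_abs]
      rw [this]
    · rw [if_neg h]; exact φnonneg _
  have lhssummable : Summable (fun j : ℤ => if M < |(j : ℝ)| then ((j : ℝ) ^ 2)⁻¹ else 0) := by
    apply Summable.of_nonneg_of_le (fun j => by split <;> positivity) hle ψsummable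
  exact (Summable.tsum_le_tsum hle lhssummable ψsummable).trans hψtsum

def mySchwartz (f : ℝ → ℂ) (hf : ContDiff ℝ (⊤ : ℕ∞) f) (hsupp : HasCompactSupport f) :
    SchwartzMap ℝ ℂ where
  toFun := f
  smooth' := hf
  decay' := by
    intro k n
    have h1 : HasCompactSupport (iteratedFDeriv ℝ n f) := hsupp.iteratedFDeriv n
    have h2 : Continuous fun x : ℝ => ‖x‖ ^ k * ‖iteratedFDeriv ℝ n f x‖ :=
      (continuous_norm.pow k).mul (hf.continuous_iteratedFDeriv (by exact_mod_cast le_top)).norm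
    have h3 : HasCompactSupport fun x : ℝ => ‖x‖ ^ k * ‖iteratedFDeriv ℝ n f x‖ :=
      h1.norm.mul_left
    obtain ⟨C, hC⟩ := h2.bounded_above_of_compact_support h3
    exact ⟨C, fun x => (le_abs_self _).trans ((Real.norm_eq_abs _).symm.trans_le (hC x))⟩

@[simp] lemma mySchwartz_apply (f : ℝ → ℂ) (hf : ContDiff ℝ (⊤ : ℕ∞) f)
    (hsupp : HasCompactSupport f) (y : ℝ) : mySchwartz f hf hsupp y = f y := rfl

lemma ftransform_eq (w : ℝ → ℝ) (ξ : ℝ) :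
    ftransform w ξ = 𝓕 (fun y => (w y : ℂ)) ξ := by
  rw [Real.fourier_real_eq_integral_exp_smul]
  unfold ftransform
  congr 1; funext y
  rw [smul_eq_mul, mul_comm]
  congr 1
  unfold e2pi
  push_cast
  ring_nf

lemma fourier_scale (f : ℝ → ℂ) {δ : ℝ} (hδ : 0 < δ) (ξ : ℝ) :
    𝓕 (fun y => f (y / δ)) ξ = (δ : ℂ) * 𝓕 f (δ * ξ) := by
  rw [Real.fourier_real_eq_integral_exp_smul,
    Real.fourier_real_eq_integral_exp_smul]
  have h : ∀ v : ℝ, Complex.exp (↑(-2 * Real.pi * v * ξ) * Complex.I) • f (v / δ)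
      = (fun y => Complex.exp (↑(-2 * Real.pi * y * (δ * ξ)) * Complex.I) • f y) (v / δ) := by
    intro v
    simp only
    have : -2 * Real.pi * (v / δ) * (δ * ξ) = -2 * Real.pi * v * ξ := by
      field_simp
    rw [this]
  simp_rw [h]
  rw [MeasureTheory.Measure.integral_comp_div
    (fun y => Complex.exp (↑(-2 * Real.pi * y * (δ * ξ)) * Complex.I) • f y) δ]
  rw [abs_of_pos hδ, Complex.real_smul]

lemma poisson_dilated (w : ℝ → ℝ) (hw : ContDiff ℝ (⊤ : ℕ∞) w)
    (hwsupp : support w ⊆ Ioo (-1 : ℝ) 1) (hweven : ∀ x, w (-x) = w x)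
    {δ : ℝ} (hδ : 0 < δ) (hδ2 : δ < 1 / 2) (x : ℝ) :
    (w (intDist x / δ) : ℂ) = ∑' j : ℤ, (δ : ℂ) * (ftransform w (δ * j) * e2pi (j * x)) := by
  have hδ0 : δ ≠ 0 := ne_of_gt hδ
  have habs : ∀ y : ℝ, w (y / δ) ≠ 0 → |y| < δ := by
    intro y hy
    have h1 : y / δ ∈ Ioo (-1 : ℝ) 1 := hwsupp hy
    obtain ⟨h2, h3⟩ := h1
    have h4 : y < δ := (div_lt_one hδ).mp h3
    have h5 : -y < δ := by
      apply (div_lt_one hδ).mp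
      rw [neg_div]
      linarith
    rw [abs_lt]
    constructor <;> linarith
  have hwC : ContDiff ℝ (⊤ : ℕ∞) (fun y : ℝ => (w y : ℂ)) :=
    Complex.ofRealCLM.contDiff.comp hw
  have hGsm : ContDiff ℝ (⊤ : ℕ∞) (fun y : ℝ => (w (y / δ) : ℂ)) :=
    hwC.comp (contDiff_id.div_const δ)
  have hGsupp : HasCompactSupport (fun y : ℝ => (w (y / δ) : ℂ)) := by
    apply HasCompactSupport.intro (isCompact_Icc (a := (-1 : ℝ)) (b := 1))
    intro y hy
    simp only [Complex.ofReal_eq_zero]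
    by_contra h
    have h1 := habs y h
    simp only [mem_Icc, not_and_or, not_le] at hy
    rw [abs_lt] at h1
    rcases hy with h2 | h2 <;> linarith
  set G := mySchwartz _ hGsm hGsupp with hG
  have hp := SchwartzMap.tsum_eq_tsum_fourier G x
  have hlhs : ∑' n : ℤ, G (x + n) = (w (intDist x / δ) : ℂ) := by
    rw [tsum_eq_single (-(round x) : ℤ)]
    · have hx : (x + ((-(round x) : ℤ) : ℝ)) = x - round x := by push_cast; ring
      rw [hG, mySchwartz_apply, hx]
      unfold intDist
      rcases le_or_gt 0 (x - round x) with h | h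
      · rw [abs_of_nonneg h]
      · rw [abs_of_neg h, neg_div, hweven]
    · intro n hn
      rw [hG, mySchwartz_apply]
      simp only [Complex.ofReal_eq_zero]
      by_contra h
      have h1 := habs _ h
      have h2 := abs_sub_round x
      have h3 : |((round x + n : ℤ) : ℝ)| < 1 := by
        push_cast
        have : (round x : ℝ) + n = (x + n) - (x - round x) := by ring
        rw [this]
        calc |(x + n) - (x - round x)| ≤ |x + n| + |x - round x| := abs_sub _ _
          _ < δ + 1 / 2 := by exact add_lt_add_of_lt_of_le h1 h2
          _ ≤ 1 := by linarith
      have h4 : |round x + n| < 1 := by exact_mod_cast h3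
      have h5 : round x + n = 0 := by rwa [Int.abs_lt_one_iff] at h4
      exact hn (by omega)
  rw [hlhs] at hp
  rw [hp]
  apply tsum_congr
  intro n
  rw [SchwartzMap.fourier_coe]
  have hcoe : ⇑G = fun y : ℝ => (w (y / δ) : ℂ) := rfl
  rw [hcoe, fourier_scale (fun y : ℝ => (w y : ℂ)) hδ (n : ℝ), ← ftransform_eq, mul_assoc]
  congr 1
  rw [fourier_coe_apply]
  unfold e2pi
  push_cast
  ring_nf


set_option maxHeartbeats 2000000 in
open scoped Classical in
theorem statement10
    (w : ℝ → ℝ) (hw : ContDiff ℝ (⊤ : ℕ∞) w)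
    (hwsupp : support w ⊆ Ioo (-1 : ℝ) 1)
    (hweven : ∀ x, w (-x) = w x)
    (η A : ℝ) (hη : 0 < η) (hA : 0 < A) :
    ∃ C > 0, ∀ Q : ℝ, 1 ≤ Q → ∀ δ : ℝ, 0 < δ → δ < 1 / 2 → ∀ x : ℝ,
      ‖((w (intDist x / δ) : ℂ) - (δ : ℂ) * ftransform w 0 -
          (δ : ℂ) * ∑' j : ℤ,
            (if 1 ≤ |j| ∧ (|j| : ℝ) ≤ Q ^ η / δ then
              ftransform w (δ * (j : ℝ)) * e2pi ((j : ℝ) * x) else 0))‖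
        ≤ C * Q ^ (-A) := by
  -- the Schwartz function associated to `w` and its Fourier transform
  have hwC : ContDiff ℝ (⊤ : ℕ∞) (fun y : ℝ => (w y : ℂ)) :=
    Complex.ofRealCLM.contDiff.comp hw
  have hWsupp : HasCompactSupport (fun y : ℝ => (w y : ℂ)) := by
    apply HasCompactSupport.intro (isCompact_Icc (a := (-1 : ℝ)) (b := 1))
    intro y hy
    simp only [Complex.ofReal_eq_zero]
    by_contra h
    obtain ⟨h1, h2⟩ := hwsupp h
    simp only [mem_Icc, not_and_or, not_le] at hy
    rcases hy with h3 | h3 <;> linarith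
  set W : SchwartzMap ℝ ℂ := mySchwartz _ hwC hWsupp with hW
  set Wh : SchwartzMap ℝ ℂ := SchwartzMap.fourierTransformCLM ℝ W with hWhdef
  have hft : ∀ ξ : ℝ, ftransform w ξ = Wh ξ := by
    intro ξ
    rw [ftransform_eq, hWhdef, SchwartzMap.fourierTransformCLM_apply]
    rfl
  -- decay constants
  set k : ℕ := ⌈A / η⌉₊ + 2 with hk
  obtain ⟨Ck, hCkpos, hCk⟩ := Wh.decay k 0
  obtain ⟨C2, hC2pos, hC2⟩ := Wh.decay 2 0
  have hCk' : ∀ ξ : ℝ, ‖ξ‖ ^ k * ‖Wh ξ‖ ≤ Ck := by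
    intro ξ; have := hCk ξ; rwa [norm_iteratedFDeriv_zero] at this
  have hC2' : ∀ ξ : ℝ, ‖ξ‖ ^ 2 * ‖Wh ξ‖ ≤ C2 := by
    intro ξ; have := hC2 ξ; rwa [norm_iteratedFDeriv_zero] at this
  refine ⟨4 * Ck, by positivity, ?_⟩
  intro Q hQ δ hδ hδ2 x
  have hδ0 : δ ≠ 0 := ne_of_gt hδ
  have hQ0 : 0 < Q := lt_of_lt_of_le one_pos hQ
  set T : ℝ := Q ^ η with hT
  have hT1 : 1 ≤ T := Real.one_le_rpow hQ (le_of_lt hη)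
  have hT0 : 0 < T := lt_of_lt_of_le one_pos hT1
  have hM2 : 2 ≤ T / δ := by
    rw [le_div_iff₀ hδ]
    nlinarith
  -- the summand
  set F : ℤ → ℂ := fun j => ftransform w (δ * (j : ℝ)) * e2pi ((j : ℝ) * x) with hF
  have hFnorm : ∀ j : ℤ, ‖F j‖ = ‖Wh (δ * (j : ℝ))‖ := by
    intro j
    rw [hF]
    simp only
    rw [norm_mul, norm_e2pi, mul_one, hft]
  -- summability of the master bound
  have hsq : Summable (fun j : ℤ => (((j : ℝ)) ^ 2)⁻¹) := by
    have := (summable_one_div_int_pow (p := 2)).mpr one_lt_two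
    simpa [one_div] using this
  have hnormsum : Summable (fun j : ℤ => ‖Wh (δ * (j : ℝ))‖) := by
    have hb : Summable (fun j : ℤ =>
        (C2 / δ ^ 2) * (((j : ℝ)) ^ 2)⁻¹ + (if j = 0 then ‖Wh 0‖ else 0)) := by
      apply (hsq.mul_left _).add
      apply summable_of_ne_finset_zero (s := {0})
      intro j hj
      simp only [Finset.mem_singleton] at hj
      rw [if_neg hj]
    apply Summable.of_norm_bounded hb
    intro j
    rw [norm_norm]
    by_cases h : j = 0
    · subst h
      norm_num
    · rw [if_neg h, add_zero]
      have hj1 : (1 : ℝ) ≤ |(j : ℝ)| := by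
        rw [← Int.cast_abs]
        exact_mod_cast Int.one_le_abs h
      have hpos : (0 : ℝ) < δ ^ 2 * (j : ℝ) ^ 2 := by
        have : ((j : ℝ)) ^ 2 ≠ 0 := by
          have : (j : ℝ) ≠ 0 := Int.cast_ne_zero.mpr h
          positivity
        positivity
      have h2 := hC2' (δ * (j : ℝ))
      rw [Real.norm_eq_abs, abs_mul, abs_of_pos hδ, mul_pow, sq_abs] at h2
      have hrw : C2 / δ ^ 2 * (((j : ℝ)) ^ 2)⁻¹ = C2 / (δ ^ 2 * ((j : ℝ)) ^ 2) := by
        rw [← div_eq_mul_inv, div_div]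
      rw [hrw, le_div_iff₀ hpos]
      calc ‖Wh (δ * (j : ℝ))‖ * (δ ^ 2 * (j : ℝ) ^ 2)
          = δ ^ 2 * (j : ℝ) ^ 2 * ‖Wh (δ * (j : ℝ))‖ := by ring
        _ ≤ C2 := h2
  have SF : Summable F := by
    apply Summable.of_norm_bounded hnormsum
    intro j; exact le_of_eq (hFnorm j)
  have Site0 : Summable (fun j : ℤ => if j = 0 then F j else 0) := by
    apply summable_of_ne_finset_zero (s := {0})
    intro j hj
    simp only [Finset.mem_singleton] at hj
    rw [if_neg hj]
  have SiteC : Summable (fun j : ℤ =>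
      if 1 ≤ |j| ∧ (|j| : ℝ) ≤ T / δ then F j else 0) := by
    apply Summable.of_norm_bounded hnormsum
    intro j
    split
    · exact le_of_eq (hFnorm j)
    · simp only [norm_zero]; positivity
  -- the Poisson identity
  have hpoisson := poisson_dilated w hw hwsupp hweven hδ hδ2 x
  have htsum0 : ∑' j : ℤ, (if j = 0 then F j else 0) = ftransform w 0 := by
    have h1 : (fun j : ℤ => if j = 0 then F j else 0)
        = fun j : ℤ => if j = 0 then ftransform w 0 else 0 := by
      funext j
      by_cases h : j = 0
      · subst h
        rw [if_pos rfl, if_pos rfl, hF]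
        simp only [Int.cast_zero, mul_zero, zero_mul, e2pi_zero, mul_one]
      · rw [if_neg h, if_neg h]
    rw [h1, tsum_ite_eq]
  -- rewrite the expression
  set g : ℤ → ℂ := fun j => F j - (if j = 0 then F j else 0) -
      (if 1 ≤ |j| ∧ (|j| : ℝ) ≤ T / δ then F j else 0) with hg
  have hexpr : (w (intDist x / δ) : ℂ) - (δ : ℂ) * ftransform w 0 -
      (δ : ℂ) * ∑' j : ℤ,
        (if 1 ≤ |j| ∧ (|j| : ℝ) ≤ T / δ then
          ftransform w (δ * (j : ℝ)) * e2pi ((j : ℝ) * x) else 0)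
      = (δ : ℂ) * ∑' j : ℤ, g j := by
    rw [hpoisson]
    have h1 : ∑' j : ℤ, (δ : ℂ) * (ftransform w (δ * (j : ℝ)) * e2pi ((j : ℝ) * x))
        = (δ : ℂ) * ∑' j : ℤ, F j := tsum_mul_left
    rw [h1, ← htsum0]
    have h2 : ∑' j : ℤ, g j = ∑' j : ℤ, F j - ∑' j : ℤ, (if j = 0 then F j else 0)
        - ∑' j : ℤ, (if 1 ≤ |j| ∧ (|j| : ℝ) ≤ T / δ then F j else 0) := by
      rw [hg]
      rw [Summable.tsum_sub (SF.sub Site0) SiteC, Summable.tsum_sub SF Site0]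
    rw [h2]
    ring
  rw [hexpr]
  -- bound the tail
  set c : ℝ := Ck / (T ^ (k - 2) * δ ^ 2) with hc
  have hc0 : 0 ≤ c := by positivity
  set hfn : ℤ → ℝ := fun j => if T / δ < |(j : ℝ)| then (((j : ℝ)) ^ 2)⁻¹ else 0 with hhfn
  have hgbound : ∀ j : ℤ, ‖g j‖ ≤ c * hfn j := by
    intro j
    have hfnpos : (0 : ℝ) ≤ hfn j := by rw [hhfn]; dsimp only; split <;> positivity
    by_cases h0 : j = 0
    · subst h0
      have h1 : g 0 = 0 := by
        rw [hg]
        dsimp only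
        split
        · split
          · rename_i hcc
            exfalso
            have := hcc.1
            simp at this
          · ring
        · rename_i hcc
          exact absurd rfl hcc
      rw [h1, norm_zero]
      positivity
    by_cases hcond : 1 ≤ |j| ∧ (|j| : ℝ) ≤ T / δ
    · have h1 : g j = 0 := by
        rw [hg]
        dsimp only
        rw [if_neg h0]
        split
        · ring
        · rename_i hcc
          exact absurd hcond hcc
      rw [h1, norm_zero]
      positivity
    · -- tail term
      have hfj : ‖g j‖ = ‖Wh (δ * (j : ℝ))‖ := by
        rw [hg]
        dsimp only
        rw [if_neg h0]
        split
        · rename_i hcc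
          exact absurd hcc hcond
        · rw [sub_zero, sub_zero]
          exact hFnorm j
      have hj1 : 1 ≤ |j| := Int.one_le_abs h0
      have htail : T / δ < |(j : ℝ)| := by
        rw [not_and_or] at hcond
        rcases hcond with h | h
        · exact absurd hj1 h
        · rwa [not_le] at h
      have hhfnj : hfn j = (((j : ℝ)) ^ 2)⁻¹ := by rw [hhfn]; dsimp; rw [if_pos htail]
      set u : ℝ := δ * |(j : ℝ)| with hu
      have huT : T < u := by
        rw [hu]
        calc T = δ * (T / δ) := by field_simp
          _ < δ * |(j : ℝ)| := by
              apply mul_lt_mul_of_pos_left htail hδ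
      have hu0 : 0 < u := lt_of_le_of_lt (le_trans zero_le_one hT1) huT
      have hnormu : ‖δ * (j : ℝ)‖ = u := by
        rw [Real.norm_eq_abs, abs_mul, abs_of_pos hδ, hu]
      have hWb : ‖Wh (δ * (j : ℝ))‖ ≤ Ck / u ^ k := by
        rw [le_div_iff₀ (pow_pos hu0 k)]
        calc ‖Wh (δ * (j : ℝ))‖ * u ^ k = u ^ k * ‖Wh (δ * (j : ℝ))‖ := by ring
          _ ≤ Ck := by rw [← hnormu]; exact hCk' _
      have hpowle : T ^ (k - 2) * (δ ^ 2 * (j : ℝ) ^ 2) ≤ u ^ k := by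
        have hk2 : k - 2 + 2 = k := by omega
        have h1 : u ^ k = u ^ (k - 2) * u ^ 2 := by rw [← pow_add, hk2]
        have h2 : u ^ 2 = δ ^ 2 * (j : ℝ) ^ 2 := by
          rw [hu, mul_pow, sq_abs]
        have h3 : T ^ (k - 2) ≤ u ^ (k - 2) := pow_le_pow_left₀ (le_of_lt hT0) huT.le _
        rw [h1, h2]
        exact mul_le_mul_of_nonneg_right h3 (by positivity)
      have hjne : ((j : ℝ)) ^ 2 ≠ 0 := by
        have : (j : ℝ) ≠ 0 := Int.cast_ne_zero.mpr h0
        positivity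
      have hdenompos : (0 : ℝ) < T ^ (k - 2) * (δ ^ 2 * (j : ℝ) ^ 2) := by positivity
      rw [hfj, hhfnj]
      calc ‖Wh (δ * (j : ℝ))‖ ≤ Ck / u ^ k := hWb
        _ ≤ Ck / (T ^ (k - 2) * (δ ^ 2 * (j : ℝ) ^ 2)) :=
            div_le_div_of_nonneg_left hCkpos.le hdenompos hpowle
        _ = c * (((j : ℝ)) ^ 2)⁻¹ := by
            rw [hc, ← div_eq_mul_inv, div_div, mul_assoc]
  have hhsummable : Summable hfn := by
    apply Summable.of_norm_bounded hsq
    intro j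
    rw [hhfn, Real.norm_eq_abs]
    dsimp
    split
    · rw [abs_of_nonneg (by positivity)]
    · rw [abs_zero]; positivity
  have hgsummable : Summable (fun j : ℤ => ‖g j‖) := by
    apply Summable.of_norm_bounded (hhsummable.mul_left c)
    intro j
    rw [norm_norm]
    exact hgbound j
  have htailbound : ∑' j : ℤ, ‖g j‖ ≤ c * (4 / (T / δ)) := by
    calc ∑' j : ℤ, ‖g j‖ ≤ ∑' j : ℤ, c * hfn j :=
          Summable.tsum_le_tsum hgbound hgsummable (hhsummable.mul_left c)
      _ = c * ∑' j : ℤ, hfn j := tsum_mul_left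
      _ ≤ c * (4 / (T / δ)) := by
          apply mul_le_mul_of_nonneg_left _ hc0
          exact tail_sum_sq hM2
  have hnormδ : ‖(δ : ℂ)‖ = δ := by
    rw [Complex.norm_real, Real.norm_eq_abs, abs_of_pos hδ]
  calc ‖(δ : ℂ) * ∑' j : ℤ, g j‖ = δ * ‖∑' j : ℤ, g j‖ := by rw [norm_mul, hnormδ]
    _ ≤ δ * ∑' j : ℤ, ‖g j‖ := by
        apply mul_le_mul_of_nonneg_left (norm_tsum_le_tsum_norm hgsummable) hδ.le
    _ ≤ δ * (c * (4 / (T / δ))) := mul_le_mul_of_nonneg_left htailbound hδ.le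
    _ = 4 * Ck / T ^ (k - 1) := by
        rw [hc]
        have hk1 : k - 2 + 1 = k - 1 := by omega
        have hTsplit : T ^ (k - 1) = T ^ (k - 2) * T := by rw [← pow_succ, hk1]
        rw [hTsplit]
        field_simp
    _ ≤ 4 * Ck * Q ^ (-A) := by
        have hTpow : T ^ (k - 1) = Q ^ (η * (k - 1 : ℕ)) := by
          rw [hT, ← Real.rpow_natCast (Q ^ η) (k - 1), ← Real.rpow_mul hQ0.le]
        have hexp : A ≤ η * (k - 1 : ℕ) := by
          have h1 : (k - 1 : ℕ) = (⌈A / η⌉₊ : ℝ) + 1 := by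
            rw [hk]
            push_cast [Nat.add_sub_cancel]
            ring
          rw [h1]
          have h2 : A / η ≤ ⌈A / η⌉₊ := Nat.le_ceil _
          have h3 : A = η * (A / η) := by field_simp
          nlinarith
        have hQA : Q ^ A ≤ T ^ (k - 1) := by
          rw [hTpow]
          exact Real.rpow_le_rpow_of_exponent_le hQ hexp
        have hQApos : 0 < Q ^ A := Real.rpow_pos_of_pos hQ0 A
        rw [Real.rpow_neg hQ0.le, ← div_eq_mul_inv]
        exact div_le_div_of_nonneg_left (by positivity) hQApos hQA
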